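/- In a normed BPA system, if Rd(α) = Rd(β) (the redundant sets of α and β coincide), then for all processes γ₁, γ₂: γ₁α ≃ γ₂α if and only if γ₁β ≃ γ₂β. -/

import Mathlib

/-- Silent-step closure (⇒): reflexive transitive closure of τ-transitions. -/
def SilentStar {S A : Type*} (trans : S → A → S → Prop) (tau : A) : S → S → Prop :=
  Relation.ReflTransGen (fun p q => trans p tau q)

/-- A symmetric relation is a branching bisimulation. -/
def IsBranchingBisim {S A : Type*} (trans : S → A → S → Prop) (tau : A)
    (R : S → S → Prop) : Prop :=
  Symmetric R ∧
  ∀ a b a' (l : A), R a b → trans a l a' →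
    (l = tau ∧ R a' b) ∨
    ∃ b'' b', SilentStar trans tau b b'' ∧ trans b'' l b' ∧ R a b'' ∧ R a' b'

/-- A symmetric relation is a weak bisimulation. -/
def IsWeakBisim {S A : Type*} (trans : S → A → S → Prop) (tau : A)
    (R : S → S → Prop) : Prop :=
  Symmetric R ∧
  ∀ a b a' (l : A), R a b → trans a l a' →
    (l = tau ∧ R a' b) ∨
    ∃ g1 g2 b', SilentStar trans tau b g1 ∧ trans g1 l g2 ∧
      SilentStar trans tau g2 b' ∧ R a' b'

/-- Branching bisimilarity: the union of all branching bisimulations. -/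
def BrBisim {S A : Type*} (trans : S → A → S → Prop) (tau : A) (a b : S) : Prop :=
  ∃ R, IsBranchingBisim trans tau R ∧ R a b

/-- Weak bisimilarity: the union of all weak bisimulations. -/
def WkBisim {S A : Type*} (trans : S → A → S → Prop) (tau : A) (a b : S) : Prop :=
  ∃ R, IsWeakBisim trans tau R ∧ R a b

/-- One-step transition of a BPA system: X β →λ α β whenever X →λ α is a rule. -/
def BPA.Trans {V A : Type*} (rules : V → A → List V → Prop)
    (p : List V) (l : A) (q : List V) : Prop :=
  ∃ X α β, p = X :: β ∧ rules X l α ∧ q = α ++ β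

/-- A step by some action. -/
def BPA.Step {V A : Type*} (rules : V → A → List V → Prop) (p q : List V) : Prop :=
  ∃ l, BPA.Trans rules p l q

/-- Reachability in a BPA system. -/
def BPA.Reach {V A : Type*} (rules : V → A → List V → Prop) : List V → List V → Prop :=
  Relation.ReflTransGen (BPA.Step rules)

/-- A BPA system is normed if every variable can reach the empty process ε. -/
def BPA.Normed {V A : Type*} (rules : V → A → List V → Prop) : Prop :=
  ∀ X : V, BPA.Reach rules [X] []

/-- The redundant set Rd(α) = { X | Xα ≃ α }. -/
def BPA.Rd {V A : Type*} (rules : V → A → List V → Prop) (tau : A) (α : List V) : Set V :=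
  {X | BrBisim (BPA.Trans rules) tau (X :: α) α}

/-! ### Auxiliary development: semi-branching bisimulations -/

section Semi

variable {S A : Type*} (tr : S → A → S → Prop) (tau : A)

/-- Semi-branching bisimulation (Basten). -/
def IsSemiBB (R : S → S → Prop) : Prop :=
  Symmetric R ∧
  ∀ a b a' (l : A), R a b → tr a l a' →
    ∃ b'' b', SilentStar tr tau b b'' ∧
      ((l = tau ∧ b' = b'') ∨ tr b'' l b') ∧ R a b'' ∧ R a' b'

/-- Semi-branching bisimilarity. -/
def SB (a b : S) : Prop := ∃ R, IsSemiBB tr tau R ∧ R a b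

variable {tr tau}

theorem silentStar_refl {a : S} : SilentStar tr tau a a := Relation.ReflTransGen.refl

theorem silentStar_trans {a b c : S} (h1 : SilentStar tr tau a b)
    (h2 : SilentStar tr tau b c) : SilentStar tr tau a c :=
  Relation.ReflTransGen.trans h1 h2

theorem silentStar_head {a b c : S} (h1 : tr a tau b)
    (h2 : SilentStar tr tau b c) : SilentStar tr tau a c :=
  Relation.ReflTransGen.head h1 h2

theorem silentStar_tail {a b c : S} (h1 : SilentStar tr tau a b)
    (h2 : tr b tau c) : SilentStar tr tau a c :=
  Relation.ReflTransGen.tail h1 h2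

theorem SB.symm {a b : S} : SB tr tau a b → SB tr tau b a
  | ⟨R, hR, hab⟩ => ⟨R, hR, hR.1 hab⟩

theorem SB.refl (a : S) : SB tr tau a a :=
  ⟨Eq, ⟨fun _ _ h => h.symm, by
    rintro a b a' l rfl h
    exact ⟨a, a', silentStar_refl, .inr h, rfl, rfl⟩⟩, rfl⟩

theorem isSemiBB_SB : IsSemiBB tr tau (SB tr tau) := by
  constructor
  · exact fun a b => SB.symm
  · rintro a b a' l ⟨R, hR, hab⟩ h
    obtain ⟨b'', b', h1, h2, h3, h4⟩ := hR.2 a b a' l hab h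
    exact ⟨b'', b', h1, h2, ⟨R, hR, h3⟩, ⟨R, hR, h4⟩⟩

/-- Silent paths are weakly matched. -/
theorem SB.silent : ∀ {a a' : S}, SilentStar tr tau a a' → ∀ {b}, SB tr tau a b →
    ∃ b', SilentStar tr tau b b' ∧ SB tr tau a' b' := by
  intro a a' h
  induction h using Relation.ReflTransGen.head_induction_on with
  | refl => exact fun hb => ⟨_, silentStar_refl, hb⟩
  | @head a c step tail ih =>
    intro b hab
    obtain ⟨b'', b', h1, h2, _h3, h4⟩ := isSemiBB_SB.2 _ _ _ _ hab step
    have hkey : SilentStar tr tau b b' ∧ SB tr tau c b' := by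
      rcases h2 with ⟨_, rfl⟩ | hstep
      · exact ⟨h1, h4⟩
      · exact ⟨silentStar_tail h1 hstep, h4⟩
    obtain ⟨b₂, hs₂, h₂⟩ := ih hkey.2
    exact ⟨b₂, silentStar_trans hkey.1 hs₂, h₂⟩

theorem SB.trans {a b c : S} (h1 : SB tr tau a b) (h2 : SB tr tau b c) :
    SB tr tau a c := by
  refine ⟨fun x z => ∃ y, SB tr tau x y ∧ SB tr tau y z, ⟨?_, ?_⟩, b, h1, h2⟩
  · rintro x z ⟨y, hxy, hyz⟩; exact ⟨y, hyz.symm, hxy.symm⟩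
  · rintro a c a' l ⟨b, hab, hbc⟩ hstep
    obtain ⟨b'', b', hb1, hb2, hb3, hb4⟩ := isSemiBB_SB.2 a b a' l hab hstep
    obtain ⟨c₁, hcc, hb''c₁⟩ := SB.silent hb1 hbc
    rcases hb2 with ⟨hl, rfl⟩ | hstep'
    · exact ⟨c₁, c₁, hcc, .inl ⟨hl, rfl⟩, ⟨_, hb3, hb''c₁⟩, ⟨_, hb4, hb''c₁⟩⟩
    · obtain ⟨c'', c', hc2, hshape, h3', h4'⟩ := isSemiBB_SB.2 _ _ _ _ hb''c₁ hstep'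
      exact ⟨c'', c', silentStar_trans hcc hc2, hshape, ⟨b'', hb3, h3'⟩, ⟨b', hb4, h4'⟩⟩

theorem IsBranchingBisim.toSemi {R : S → S → Prop}
    (h : IsBranchingBisim tr tau R) : IsSemiBB tr tau R := by
  refine ⟨h.1, ?_⟩
  intro a b a' l hab hstep
  rcases h.2 a b a' l hab hstep with ⟨rfl, h'⟩ | ⟨b'', b', h1, h2, h3, h4⟩
  · exact ⟨b, b, silentStar_refl, .inl ⟨rfl, rfl⟩, hab, h'⟩
  · exact ⟨b'', b', h1, .inr h2, h3, h4⟩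

theorem isBranchingBisim_SB : IsBranchingBisim tr tau (SB tr tau) := by
  refine ⟨fun a b => SB.symm, ?_⟩
  intro a b a' l hab hstep
  obtain ⟨b'', b', h1, h2, h3, h4⟩ := isSemiBB_SB.2 a b a' l hab hstep
  rcases h2 with ⟨hl, rfl⟩ | hstep'
  · exact Or.inl ⟨hl, (h4.trans h3.symm).trans hab⟩
  · exact Or.inr ⟨b'', b', h1, hstep', h3, h4⟩

theorem brBisim_iff_SB {a b : S} : BrBisim tr tau a b ↔ SB tr tau a b :=
  ⟨fun ⟨R, hR, h⟩ => ⟨R, hR.toSemi, h⟩, fun h => ⟨SB tr tau, isBranchingBisim_SB, h⟩⟩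

/-- Stuttering lemma: intermediate states of a silent path with related
endpoints are related to the endpoints. -/
theorem SB.stutter {x m y : S} (h1 : SilentStar tr tau x m) (h2 : SilentStar tr tau m y)
    (hxy : SB tr tau x y) : SB tr tau x m := by
  have key : SB tr tau m x := by
    refine ⟨fun p q => SB tr tau p q ∨
      ((∃ u w, SilentStar tr tau u p ∧ SilentStar tr tau p w ∧
        SB tr tau u w ∧ SB tr tau u q) ∨
       (∃ u w, SilentStar tr tau u q ∧ SilentStar tr tau q w ∧
        SB tr tau u w ∧ SB tr tau u p)), ⟨?_, ?_⟩,
      .inr (.inl ⟨x, y, h1, h2, hxy, SB.refl x⟩)⟩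
    · rintro p q (h | h | h)
      · exact .inl h.symm
      · exact .inr (.inr h)
      · exact .inr (.inl h)
    · rintro p q p' l (hpq | ⟨u, w, hup, hpw, huw, huq⟩ | ⟨u, w, huq, hqw, huw, hup⟩) hstep
      · obtain ⟨b'', b', ha, hb, hc, hd⟩ := isSemiBB_SB.2 _ _ _ _ hpq hstep
        exact ⟨b'', b', ha, hb, .inl hc, .inl hd⟩
      · obtain ⟨q₁, hqq₁, hpq₁⟩ := SB.silent hup huq
        obtain ⟨q'', q', ha, hb, hc, hd⟩ := isSemiBB_SB.2 _ _ _ _ hpq₁ hstep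
        exact ⟨q'', q', silentStar_trans hqq₁ ha, hb, .inl hc, .inl hd⟩
      · have hpw : SB tr tau p w := hup.symm.trans huw
        obtain ⟨w'', w', ha, hb, hc, hd⟩ := isSemiBB_SB.2 _ _ _ _ hpw hstep
        exact ⟨w'', w', silentStar_trans hqw ha, hb, .inl hc, .inl hd⟩
  exact key.symm

end Semi

/-! ### BPA-level lemmas -/

namespace BPA

variable {V A : Type*} {rules : V → A → List V → Prop} {tau : A}

theorem trans_nil {l : A} {q : List V} : ¬ BPA.Trans rules [] l q := by
  rintro ⟨X, ζ, σ, h, -, -⟩; cases h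

theorem trans_cons {X : V} {σ : List V} {l : A} {q : List V} :
    BPA.Trans rules (X :: σ) l q ↔ ∃ ζ, rules X l ζ ∧ q = ζ ++ σ := by
  constructor
  · rintro ⟨Y, ζ, σ', h, hr, rfl⟩
    obtain ⟨rfl, rfl⟩ := List.cons.injEq .. ▸ h
    exact ⟨ζ, hr, rfl⟩
  · rintro ⟨ζ, hr, rfl⟩
    exact ⟨X, ζ, σ, rfl, hr, rfl⟩

theorem trans_append {γ γ' δ : List V} {l : A} (h : BPA.Trans rules γ l γ') :
    BPA.Trans rules (γ ++ δ) l (γ' ++ δ) := by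
  obtain ⟨X, ζ, σ, rfl, hr, rfl⟩ := h
  exact ⟨X, ζ, σ ++ δ, rfl, hr, List.append_assoc ..⟩

theorem silent_append {γ γ' δ : List V}
    (h : SilentStar (BPA.Trans rules) tau γ γ') :
    SilentStar (BPA.Trans rules) tau (γ ++ δ) (γ' ++ δ) :=
  Relation.ReflTransGen.lift (r := fun p q => BPA.Trans rules p tau q)
    (p := fun p q => BPA.Trans rules p tau q) (· ++ δ) (fun _ _ hs => trans_append hs) _ _ h

theorem silent_nil_eq {t : List V} (h : SilentStar (BPA.Trans rules) tau [] t) :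
    t = [] := by
  rcases Relation.ReflTransGen.cases_head h with rfl | ⟨c, hc, -⟩
  · rfl
  · exact absurd hc trans_nil

/-- Paths to ε with a count of steps that may be charged. -/
inductive NW (rules : V → A → List V → Prop) (tau : A) : List V → ℕ → Prop
  | nil : NW rules tau [] 0
  | tauStep {p q n} : BPA.Trans rules p tau q → NW rules tau q n → NW rules tau p n
  | visStep {p q n} {l : A} : BPA.Trans rules p l q → NW rules tau q n → NW rules tau p (n + 1)

theorem nw_silent : ∀ {y b : List V}, SilentStar (BPA.Trans rules) tau y b →
    ∀ {m}, NW rules tau b m → NW rules tau y m := by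
  intro y b h
  induction h using Relation.ReflTransGen.head_induction_on with
  | refl => exact fun h => h
  | head step _ ih => exact fun h => .tauStep step (ih h)

theorem nw_zero_silent : ∀ {γ : List V} {n}, NW rules tau γ n → n = 0 →
    SilentStar (BPA.Trans rules) tau γ [] := by
  intro γ n h
  induction h with
  | nil => exact fun _ => silentStar_refl
  | tauStep hs _ ih => exact fun h0 => silentStar_head hs (ih h0)
  | visStep hs _ _ => exact fun h0 => absurd h0 (Nat.succ_ne_zero _)

theorem nw_append : ∀ {γ : List V} {n₁}, NW rules tau γ n₁ → ∀ {δ n₂}, NW rules tau δ n₂ →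
    NW rules tau (γ ++ δ) (n₁ + n₂) := by
  intro γ n₁ h
  induction h with
  | nil => intro δ n₂ h; simpa using h
  | tauStep hs _ ih => exact fun h => .tauStep (trans_append hs) (ih h)
  | visStep hs _ ih =>
    intro δ n₂ h
    have := NW.visStep (trans_append hs) (ih h)
    rwa [Nat.succ_add]

theorem nw_split : ∀ {p : List V} {n}, NW rules tau p n → ∀ {γ δ : List V}, p = γ ++ δ →
    ∃ n₁ n₂, n₁ + n₂ = n ∧ NW rules tau γ n₁ ∧ NW rules tau δ n₂ := by
  intro p n h
  induction h with
  | nil =>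
    rintro γ δ hp
    obtain ⟨rfl, rfl⟩ := (List.append_eq_nil_iff).mp hp.symm
    exact ⟨0, 0, rfl, .nil, .nil⟩

  | @tauStep p q n hs hq ih =>
    rintro γ δ hp
    match γ, hp with
    | [], hp => exact ⟨0, n, Nat.zero_add n, .nil, by rw [List.nil_append] at hp; exact hp ▸ NW.tauStep hs hq⟩
    | X :: γ₀, hp =>
      subst hp
      obtain ⟨ζ, hr, rfl⟩ := trans_cons.mp hs
      obtain ⟨n₁, n₂, hsum, h1, h2⟩ := ih (γ := ζ ++ γ₀) (δ := δ) (List.append_assoc ..).symm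
      exact ⟨n₁, n₂, hsum, .tauStep (trans_cons.mpr ⟨ζ, hr, rfl⟩) h1, h2⟩
  | @visStep p q n l hs hq ih =>
    rintro γ δ hp
    match γ, hp with
    | [], hp => exact ⟨0, n + 1, Nat.zero_add _, .nil, by rw [List.nil_append] at hp; exact hp ▸ NW.visStep hs hq⟩
    | X :: γ₀, hp =>
      subst hp
      obtain ⟨ζ, hr, rfl⟩ := trans_cons.mp hs
      obtain ⟨n₁, n₂, hsum, h1, h2⟩ := ih (γ := ζ ++ γ₀) (δ := δ) (List.append_assoc ..).symm
      exact ⟨n₁ + 1, n₂, by omega, .visStep (trans_cons.mpr ⟨ζ, hr, rfl⟩) h1, h2⟩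

theorem reach_nw : ∀ {p : List V}, BPA.Reach rules p [] → ∃ n, NW rules tau p n := by
  intro p h
  induction h using Relation.ReflTransGen.head_induction_on with
  | refl => exact ⟨0, .nil⟩
  | head step _ ih =>
    obtain ⟨l, hs⟩ := step
    obtain ⟨n, hn⟩ := ih
    exact ⟨n + 1, .visStep hs hn⟩

theorem all_nw (hn : BPA.Normed rules) : ∀ σ : List V, ∃ n, NW rules tau σ n := by
  intro σ
  induction σ with
  | nil => exact ⟨0, .nil⟩
  | cons X σ ih =>
    obtain ⟨n₁, h1⟩ := reach_nw (tau := tau) (hn X)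
    obtain ⟨n₂, h2⟩ := ih
    exact ⟨n₁ + n₂, by simpa using nw_append h1 h2⟩

end BPA

namespace BPA

variable {V A : Type*} {rules : V → A → List V → Prop} {tau : A}

/-- A process semi-branching-bisimilar to ε silently reduces to ε. -/
theorem nw_of_sb_nil : ∀ {y : List V} {n}, NW rules tau y n →
    SB (BPA.Trans rules) tau y [] → NW rules tau y 0 := by
  intro y n h
  induction h with
  | nil => exact fun _ => .nil
  | @tauStep p q n hs _ ih =>
    intro hsb
    obtain ⟨b'', b', h1, h2, -, h4⟩ := (isSemiBB_SB).2 _ _ _ _ hsb hs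
    obtain rfl := silent_nil_eq h1
    rcases h2 with ⟨-, rfl⟩ | hstep
    · exact .tauStep hs (ih h4)
    · exact absurd hstep trans_nil
  | @visStep p q n l hs _ ih =>
    intro hsb
    obtain ⟨b'', b', h1, h2, -, h4⟩ := (isSemiBB_SB).2 _ _ _ _ hsb hs
    obtain rfl := silent_nil_eq h1
    rcases h2 with ⟨rfl, rfl⟩ | hstep
    · exact .tauStep hs (ih h4)
    · exact absurd hstep trans_nil

/-- Norm transfer along semi-branching bisimilarity. -/
theorem nw_transfer (hall : ∀ σ : List V, ∃ n, NW rules tau σ n) :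
    ∀ {x : List V} {n}, NW rules tau x n → ∀ {y}, SB (BPA.Trans rules) tau x y →
    ∃ m ≤ n, NW rules tau y m := by
  intro x n h
  induction h with
  | nil =>
    intro y hy
    obtain ⟨ny, hny⟩ := hall y
    exact ⟨0, Nat.zero_le _, nw_of_sb_nil hny hy.symm⟩
  | @tauStep p q n hs _ ih =>
    intro y hy
    obtain ⟨b'', b', h1, h2, -, h4⟩ := (isSemiBB_SB).2 _ _ _ _ hy hs
    have hsil : SilentStar (BPA.Trans rules) tau y b' := by
      rcases h2 with ⟨-, rfl⟩ | hstep
      · exact h1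
      · exact silentStar_tail h1 hstep
    obtain ⟨m, hm, hnw⟩ := ih h4
    exact ⟨m, hm, nw_silent hsil hnw⟩
  | @visStep p q n l hs _ ih =>
    intro y hy
    obtain ⟨b'', b', h1, h2, -, h4⟩ := (isSemiBB_SB).2 _ _ _ _ hy hs
    obtain ⟨m, hm, hnw⟩ := ih h4
    rcases h2 with ⟨-, rfl⟩ | hstep
    · exact ⟨m, le_trans hm (Nat.le_succ n), nw_silent h1 hnw⟩
    · exact ⟨m + 1, Nat.succ_le_succ hm, nw_silent h1 (.visStep hstep hnw)⟩

/-- If γα is bisimilar to α then γ has visible norm 0. -/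
theorem norm_zero (hn : BPA.Normed rules) {γ α : List V}
    (h : SB (BPA.Trans rules) tau (γ ++ α) α) : NW rules tau γ 0 := by
  classical
  have hall : ∀ σ : List V, ∃ n, NW rules tau σ n := all_nw hn
  have hα : ∃ n, NW rules tau α n := hall α
  obtain ⟨m, hm, hnw⟩ := nw_transfer hall (Nat.find_spec hα) h.symm
  obtain ⟨n₁, n₂, hsum, h1, h2⟩ := nw_split hnw rfl
  have : Nat.find hα ≤ n₂ := Nat.find_min' hα h2
  have hn1 : n₁ = 0 := by omega
  exact hn1 ▸ h1

/-- Decomposition of a silent path from γ ++ α. -/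
theorem silent_decomp : ∀ {p t : List V}, SilentStar (BPA.Trans rules) tau p t →
    ∀ {σ α : List V}, p = σ ++ α →
    (∃ σ', SilentStar (BPA.Trans rules) tau σ σ' ∧ t = σ' ++ α) ∨
    (SilentStar (BPA.Trans rules) tau σ [] ∧ SilentStar (BPA.Trans rules) tau α t) := by
  intro p t h
  induction h using Relation.ReflTransGen.head_induction_on with
  | refl => exact fun hp => .inl ⟨_, silentStar_refl, hp⟩
  | @head p c step tail ih =>
    rintro σ α hp
    cases σ with
    | nil =>
      rw [List.nil_append] at hp
      subst hp
      exact .inr ⟨silentStar_refl, silentStar_head step tail⟩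
    | cons X σ₀ =>
      subst hp
      obtain ⟨ζ, hr, rfl⟩ := trans_cons.mp step
      rcases ih (σ := ζ ++ σ₀) (α := α) (List.append_assoc ..).symm with
        ⟨σ', hs, ht⟩ | ⟨h0, hα⟩
      · exact .inl ⟨σ', silentStar_head (trans_cons.mpr ⟨ζ, hr, rfl⟩) hs, ht⟩
      · exact .inr ⟨silentStar_head (trans_cons.mpr ⟨ζ, hr, rfl⟩) h0, hα⟩

/-- Left congruence: prepending a common prefix preserves bisimilarity. -/
theorem SB.congr {δ δ' : List V} (h : SB (BPA.Trans rules) tau δ δ') (σ : List V) :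
    SB (BPA.Trans rules) tau (σ ++ δ) (σ ++ δ') := by
  refine ⟨fun p q => SB (BPA.Trans rules) tau p q ∨
      (∃ σ, (p = σ ++ δ ∧ q = σ ++ δ') ∨ (p = σ ++ δ' ∧ q = σ ++ δ)),
    ⟨?_, ?_⟩, .inr ⟨σ, .inl ⟨rfl, rfl⟩⟩⟩
  · rintro p q (hpq | ⟨σ, ⟨rfl, rfl⟩ | ⟨rfl, rfl⟩⟩)
    · exact .inl hpq.symm
    · exact .inr ⟨σ, .inr ⟨rfl, rfl⟩⟩
    · exact .inr ⟨σ, .inl ⟨rfl, rfl⟩⟩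
  · rintro p q p' l (hpq | ⟨σ, ⟨rfl, rfl⟩ | ⟨rfl, rfl⟩⟩) hstep
    · obtain ⟨b'', b', h1, h2, h3, h4⟩ := (isSemiBB_SB).2 _ _ _ _ hpq hstep
      exact ⟨b'', b', h1, h2, .inl h3, .inl h4⟩
    · match σ, hstep with
      | [], hstep =>
        obtain ⟨b'', b', h1, h2, h3, h4⟩ := (isSemiBB_SB).2 _ _ _ _ h (by simpa using hstep)
        exact ⟨b'', b', by simpa using h1, h2, .inl h3, .inl h4⟩
      | X :: σ₀, hstep =>
        obtain ⟨ζ, hr, rfl⟩ := trans_cons.mp hstep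
        refine ⟨X :: σ₀ ++ δ', ζ ++ (σ₀ ++ δ'), silentStar_refl,
          .inr (trans_cons.mpr ⟨ζ, hr, rfl⟩), .inr ⟨X :: σ₀, .inl ⟨rfl, rfl⟩⟩,
          .inr ⟨ζ ++ σ₀, .inl ⟨?_, ?_⟩⟩⟩ <;> simp [List.append_assoc]
    · match σ, hstep with
      | [], hstep =>
        obtain ⟨b'', b', h1, h2, h3, h4⟩ :=
          (isSemiBB_SB).2 _ _ _ _ h.symm (by simpa using hstep)
        exact ⟨b'', b', by simpa using h1, h2, .inl h3, .inl h4⟩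
      | X :: σ₀, hstep =>
        obtain ⟨ζ, hr, rfl⟩ := trans_cons.mp hstep
        refine ⟨X :: σ₀ ++ δ, ζ ++ (σ₀ ++ δ), silentStar_refl,
          .inr (trans_cons.mpr ⟨ζ, hr, rfl⟩), .inr ⟨X :: σ₀, .inr ⟨rfl, rfl⟩⟩,
          .inr ⟨ζ ++ σ₀, .inr ⟨?_, ?_⟩⟩⟩ <;> simp [List.append_assoc]

end BPA

namespace BPA

variable {V A : Type*} {rules : V → A → List V → Prop} {tau : A}

/-- Key lemma: if `Rd α ⊆ Rd β` then any γ with γα ≃ α satisfies γβ ≃ β. -/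
theorem lemmaA (hn : BPA.Normed rules) {α β : List V}
    (hsub : ∀ X : V, SB (BPA.Trans rules) tau (X :: α) α →
      SB (BPA.Trans rules) tau (X :: β) β) :
    ∀ γ : List V, SB (BPA.Trans rules) tau (γ ++ α) α →
      SB (BPA.Trans rules) tau (γ ++ β) β := by
  intro γ
  induction γ with
  | nil => intro _; exact SB.refl β
  | cons X γ₀ ih =>
    intro h
    -- γ has visible norm 0
    have hz : NW rules tau (X :: γ₀) 0 := norm_zero hn h
    obtain ⟨n₁, n₂, hsum, hX0, hγ₀0⟩ := nw_split hz (γ := [X]) (δ := γ₀) rfl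
    have hX : SilentStar (BPA.Trans rules) tau [X] [] :=
      nw_zero_silent hX0 (by omega)
    have hγ₀ : SilentStar (BPA.Trans rules) tau γ₀ [] :=
      nw_zero_silent hγ₀0 (by omega)
    -- B1: γ₀ ++ α ≃ α
    have h1 : SilentStar (BPA.Trans rules) tau ((X :: γ₀) ++ α) (γ₀ ++ α) := by
      have := silent_append (δ := γ₀ ++ α) hX
      simpa using this
    obtain ⟨η, hαη, huη⟩ := SB.silent h1 h
    have h2 : SilentStar (BPA.Trans rules) tau (γ₀ ++ α) α := by
      have := silent_append (δ := α) hγ₀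
      simpa using this
    have hB1 : SB (BPA.Trans rules) tau (γ₀ ++ α) α := SB.stutter h2 hαη huη
    -- head is redundant for α
    have hXα : SB (BPA.Trans rules) tau (X :: α) α := by
      have hc := SB.congr hB1 [X]
      have hc' : SB (BPA.Trans rules) tau (X :: α) ((X :: γ₀) ++ α) := by
        simpa using hc.symm
      exact hc'.trans h
    -- conclude
    have hXβ := hsub X hXα
    have hγ₀β := ih hB1
    have hc := SB.congr hγ₀β [X]
    have hc' : SB (BPA.Trans rules) tau ((X :: γ₀) ++ β) (X :: β) := by
      simpa using hc
    exact hc'.trans hXβ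

/-- One direction of the suffix exchange. -/
theorem exchange (hn : BPA.Normed rules) {α β : List V}
    (hsub : ∀ X : V, SB (BPA.Trans rules) tau (X :: α) α →
      SB (BPA.Trans rules) tau (X :: β) β)
    {γ₁ γ₂ : List V} (h : SB (BPA.Trans rules) tau (γ₁ ++ α) (γ₂ ++ α)) :
    SB (BPA.Trans rules) tau (γ₁ ++ β) (γ₂ ++ β) := by
  refine ⟨fun p q => SB (BPA.Trans rules) tau p q ∨
      ∃ g₁ g₂, p = g₁ ++ β ∧ q = g₂ ++ β ∧
        SB (BPA.Trans rules) tau (g₁ ++ α) (g₂ ++ α),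
    ⟨?_, ?_⟩, .inr ⟨γ₁, γ₂, rfl, rfl, h⟩⟩
  · rintro p q (hpq | ⟨g₁, g₂, rfl, rfl, hg⟩)
    · exact .inl hpq.symm
    · exact .inr ⟨g₂, g₁, rfl, rfl, hg.symm⟩
  · rintro p q p' l (hpq | ⟨g₁, g₂, rfl, rfl, hg⟩) hstep
    · obtain ⟨b'', b', h1, h2, h3, h4⟩ := (isSemiBB_SB).2 _ _ _ _ hpq hstep
      rcases h2 with ⟨hl, rfl⟩ | hstep'
      · exact ⟨_, _, h1, .inl ⟨hl, rfl⟩, .inl h3, .inl h4⟩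
      · exact ⟨b'', b', h1, .inr hstep', .inl h3, .inl h4⟩
    · -- the pair case
      -- helper: if g₁ ++ α ≃ α we can resolve via bisimilarity of g₁β and g₂β
      have hres : SB (BPA.Trans rules) tau (g₁ ++ α) α →
          ∃ b'' b', SilentStar (BPA.Trans rules) tau (g₂ ++ β) b'' ∧
            ((l = tau ∧ b' = b'') ∨ BPA.Trans rules b'' l b') ∧
            SB (BPA.Trans rules) tau (g₁ ++ β) b'' ∧
            SB (BPA.Trans rules) tau p' b' := by
        intro hA
        have h1β := lemmaA hn hsub g₁ hA
        have h2β := lemmaA hn hsub g₂ (hg.symm.trans hA)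
        have hββ : SB (BPA.Trans rules) tau (g₁ ++ β) (g₂ ++ β) :=
          h1β.trans h2β.symm
        exact (isSemiBB_SB).2 _ _ _ _ hββ hstep
      have embed : (∃ b'' b', SilentStar (BPA.Trans rules) tau (g₂ ++ β) b'' ∧
            ((l = tau ∧ b' = b'') ∨ BPA.Trans rules b'' l b') ∧
            SB (BPA.Trans rules) tau (g₁ ++ β) b'' ∧
            SB (BPA.Trans rules) tau p' b') → True := fun _ => trivial
      clear embed
      cases g₁ with
      | nil =>
        obtain ⟨b'', b', ha, hb, hc, hd⟩ := hres (by simpa using SB.refl α)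
        exact ⟨b'', b', ha, hb, .inl hc, .inl hd⟩
      | cons X g₁₀ =>
        obtain ⟨ζ, hr, rfl⟩ := trans_cons.mp hstep
        -- the corresponding α-move
        have hαstep : BPA.Trans rules ((X :: g₁₀) ++ α) l ((ζ ++ g₁₀) ++ α) :=
          trans_cons.mpr ⟨ζ, hr, List.append_assoc ..⟩
        obtain ⟨s'', s', hsil, h2, hW1, hW2⟩ := (isSemiBB_SB).2 _ _ _ _ hg hαstep
        rcases h2 with ⟨hl, rfl⟩ | hstep'
        · -- τ-move answered by staying put... but semi zero-step: s' = s''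
          -- decompose the silent path anyway
          rcases silent_decomp hsil rfl with ⟨σ', hσ, rfl⟩ | ⟨h0, hαs⟩
          · cases σ' with
            | nil =>
              obtain ⟨b'', b', ha, hb, hc, hd⟩ := hres (by simpa using hW1)
              exact ⟨b'', b', ha, hb, .inl hc, .inl hd⟩
            | cons Y g₂₀ =>
              refine ⟨(Y :: g₂₀) ++ β, (Y :: g₂₀) ++ β, silent_append hσ,
                .inl ⟨hl, rfl⟩, .inr ⟨X :: g₁₀, Y :: g₂₀, rfl, rfl, hW1⟩,
                .inr ⟨ζ ++ g₁₀, Y :: g₂₀, (List.append_assoc ..).symm, rfl, ?_⟩⟩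
              simpa [List.append_assoc] using hW2
          · have hgs : SB (BPA.Trans rules) tau (g₂ ++ α) s' := hg.symm.trans hW1
            have hm : SilentStar (BPA.Trans rules) tau (g₂ ++ α) α := by
              have := silent_append (δ := α) h0
              simpa using this
            obtain ⟨b'', b', ha, hb, hc, hd⟩ := hres (hg.trans (SB.stutter hm hαs hgs))
            exact ⟨b'', b', ha, hb, .inl hc, .inl hd⟩
        · rcases silent_decomp hsil rfl with ⟨σ', hσ, rfl⟩ | ⟨h0, hαs⟩
          · cases σ' with
            | nil =>
              obtain ⟨b'', b', ha, hb, hc, hd⟩ := hres (by simpa using hW1)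
              exact ⟨b'', b', ha, hb, .inl hc, .inl hd⟩
            | cons Y g₂₀ =>
              obtain ⟨ξ, hrY, rfl⟩ := trans_cons.mp hstep'
              refine ⟨(Y :: g₂₀) ++ β, (ξ ++ g₂₀) ++ β, silent_append hσ,
                .inr (trans_cons.mpr ⟨ξ, hrY, List.append_assoc ..⟩),
                .inr ⟨X :: g₁₀, Y :: g₂₀, rfl, rfl, hW1⟩,
                .inr ⟨ζ ++ g₁₀, ξ ++ g₂₀, (List.append_assoc ..).symm, rfl, ?_⟩⟩
              simpa [List.append_assoc] using hW2
          · have hgs : SB (BPA.Trans rules) tau (g₂ ++ α) s'' := hg.symm.trans hW1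
            have hm : SilentStar (BPA.Trans rules) tau (g₂ ++ α) α := by
              have := silent_append (δ := α) h0
              simpa using this
            obtain ⟨b'', b', ha, hb, hc, hd⟩ := hres (hg.trans (SB.stutter hm hαs hgs))
            exact ⟨b'', b', ha, hb, .inl hc, .inl hd⟩

end BPA

/-- If two processes of a normed BPA system have the same redundant set, they
can be exchanged as suffixes without affecting branching bisimilarity. -/
theorem rd_eq_suffix_exchange {V A : Type*} (rules : V → A → List V → Prop) (tau : A)
    (hn : BPA.Normed rules) (α β : List V)
    (hrd : BPA.Rd rules tau α = BPA.Rd rules tau β) :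
    ∀ γ₁ γ₂ : List V,
      (BrBisim (BPA.Trans rules) tau (γ₁ ++ α) (γ₂ ++ α) ↔
       BrBisim (BPA.Trans rules) tau (γ₁ ++ β) (γ₂ ++ β)) := by
  intro γ₁ γ₂
  have hab : ∀ X : V, SB (BPA.Trans rules) tau (X :: α) α →
      SB (BPA.Trans rules) tau (X :: β) β := by
    intro X hX
    have : X ∈ BPA.Rd rules tau α := brBisim_iff_SB.mpr hX
    rw [hrd] at this
    exact brBisim_iff_SB.mp this
  have hba : ∀ X : V, SB (BPA.Trans rules) tau (X :: β) β →
      SB (BPA.Trans rules) tau (X :: α) α := by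
    intro X hX
    have : X ∈ BPA.Rd rules tau β := brBisim_iff_SB.mpr hX
    rw [← hrd] at this
    exact brBisim_iff_SB.mp this
  constructor
  · intro h
    exact brBisim_iff_SB.mpr (BPA.exchange hn hab (brBisim_iff_SB.mp h))
  · intro h
    exact brBisim_iff_SB.mpr (BPA.exchange hn hba (brBisim_iff_SB.mp h))
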